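/- Let $F:\Sigma_N\times I\to\Sigma_N\times I$, $F(\xi,p)=(\sigma\xi, f_{\xi_0}(p))$, be a step skew-product whose fiber maps $f_1,\dots,f_N:I\to I$ are $C^1$ diffeomorphisms onto their images, and let $\Lambda=\bigcap_{n\ge0}F^n(\Sigma_N\times I)$ be its maximal invariant set. If $H\subset\Lambda$ is an $F$-invariant hyperbolic set (with fiber contraction or fiber expansion), then there exists $M\ge1$ such that for every $\xi\in\Sigma_N$ the fiber slice $H_\xi=\{p\in I:(\xi,p)\in H\}$ has cardinality at most $M$. -/

import Mathlib

open Set Filter MeasureTheory Topology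

noncomputable section

/-- The base space `Σ_N = {1,…,N}^ℤ`. -/
abbrev BSeq (N : ℕ) := ℤ → Fin N

/-- The shift map on bilateral sequences. -/
def shiftSeq {α : Type*} (ξ : ℤ → α) : ℤ → α := fun n => ξ (n + 1)

/-- The unit interval. -/
def I01 : Set ℝ := Set.Icc 0 1

/-- Forward composition of fiber maps: `fw h ξ n = h (ξ (n-1)) ∘ ⋯ ∘ h (ξ 0)`. -/
def fw {α : Type*} (h : α → ℝ → ℝ) (ξ : ℤ → α) : ℕ → ℝ → ℝ
  | 0 => id
  | n + 1 => fun p => h (ξ (n : ℤ)) (fw h ξ n p)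

/-- The step skew-product `F(ξ,p) = (σξ, f_{ξ₀}(p))`. -/
def Fmap {N : ℕ} (f : Fin N → ℝ → ℝ) (z : BSeq N × ℝ) : BSeq N × ℝ :=
  (shiftSeq z.1, f (z.1 0) z.2)

/-- `H` is hyperbolic with fiber contraction. -/
def HypContr {N : ℕ} (f : Fin N → ℝ → ℝ) (H : Set (BSeq N × ℝ)) : Prop :=
  ∃ c : ℝ, 0 < c ∧ ∃ lam : ℝ, 0 < lam ∧ lam < 1 ∧
    ∀ n : ℕ, 1 ≤ n → ∀ z ∈ H, |deriv (fw f z.1 n) z.2| ≤ c * lam ^ n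

/-- `H` is hyperbolic with fiber expansion (fiber contraction for `F⁻¹`). -/
def HypExp {N : ℕ} (f : Fin N → ℝ → ℝ) (H : Set (BSeq N × ℝ)) : Prop :=
  ∃ c : ℝ, 0 < c ∧ ∃ lam : ℝ, 0 < lam ∧ lam < 1 ∧
    ∀ n : ℕ, 1 ≤ n → ∀ z ∈ H, c⁻¹ * lam⁻¹ ^ n ≤ |deriv (fw f z.1 n) z.2|
section Helpers

variable {N : ℕ}

lemma shift_iter {α : Type*} (ξ : ℤ → α) (a : ℕ) (m : ℤ) :
    (shiftSeq^[a] ξ) m = ξ (m + a) := by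
  induction a generalizing ξ m with
  | zero => simp
  | succ a ih =>
    rw [Function.iterate_succ_apply]
    rw [ih (shiftSeq ξ) m]
    simp [shiftSeq]
    ring_nf

lemma shift_inj {α : Type*} : Function.Injective (@shiftSeq α) := by
  intro a b h
  funext m
  have := congrFun h (m - 1)
  simpa [shiftSeq] using this

lemma fw_add {α : Type*} (h : α → ℝ → ℝ) (ξ : ℤ → α) (a m : ℕ) (p : ℝ) :
    fw h ξ (a + m) p = fw h (shiftSeq^[a] ξ) m (fw h ξ a p) := by
  induction m with
  | zero => simp [fw]
  | succ m ih =>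
    show fw h ξ (a + m + 1) p = _
    rw [show a + m + 1 = (a + m) + 1 from rfl]
    simp only [fw]
    rw [ih, shift_iter]
    norm_num
    ring_nf

lemma Fmap_iter (f : Fin N → ℝ → ℝ) (ξ : BSeq N) (p : ℝ) (m : ℕ) :
    (Fmap f)^[m] (ξ, p) = (shiftSeq^[m] ξ, fw f ξ m p) := by
  induction m with
  | zero => simp [fw]
  | succ m ih =>
    rw [Function.iterate_succ_apply', ih]
    simp only [Fmap, fw]
    rw [shift_iter]
    norm_num
    funext k
    simp [shiftSeq, shift_iter]
    ring_nf

lemma fw_congr {α : Type*} (h : α → ℝ → ℝ) (ξ η : ℤ → α) (n : ℕ)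
    (hagree : ∀ k : ℕ, k < n → ξ (k : ℤ) = η (k : ℤ)) :
    fw h ξ n = fw h η n := by
  induction n with
  | zero => rfl
  | succ n ih =>
    funext p
    simp only [fw]
    rw [ih (fun k hk => hagree k (Nat.lt_succ_of_lt hk)), hagree n (Nat.lt_succ_self n)]

end Helpers
section Analytic

variable {N : ℕ} {f : Fin N → ℝ → ℝ}

lemma I01_eq : I01 = Set.Icc (0:ℝ) 1 := rfl

lemma I01_compact : IsCompact I01 := by rw [I01_eq]; exact isCompact_Icc

lemma I01_uniqueDiff : UniqueDiffOn ℝ I01 := by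
  rw [I01_eq]; exact uniqueDiffOn_Icc zero_lt_one

lemma fw_mem (hmap : ∀ i, Set.MapsTo (f i) I01 I01) (ξ : BSeq N) (n : ℕ)
    {p : ℝ} (hp : p ∈ I01) : fw f ξ n p ∈ I01 := by
  induction n with
  | zero => exact hp
  | succ n ih => exact hmap _ ih

lemma fw_injOn (hinj : ∀ i, Set.InjOn (f i) I01)
    (hmap : ∀ i, Set.MapsTo (f i) I01 I01) (ξ : BSeq N) (n : ℕ) :
    Set.InjOn (fw f ξ n) I01 := by
  induction n with
  | zero => exact fun a _ b _ h => h
  | succ n ih =>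
    intro a ha b hb h
    exact ih ha hb ((hinj _) (fw_mem hmap ξ n ha) (fw_mem hmap ξ n hb) h)

lemma f_diffAt (hder : ∀ i, ∀ p ∈ I01, deriv (f i) p ≠ 0) (i : Fin N)
    {p : ℝ} (hp : p ∈ I01) : DifferentiableAt ℝ (f i) p :=
  differentiableAt_of_deriv_ne_zero (hder i p hp)

lemma derivf_contOn (hC1 : ∀ i, ContDiffOn ℝ 1 (f i) I01)
    (hder : ∀ i, ∀ p ∈ I01, deriv (f i) p ≠ 0) (i : Fin N) :
    ContinuousOn (deriv (f i)) I01 := by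
  have h1 : ContinuousOn (derivWithin (f i) I01) I01 :=
    (hC1 i).continuousOn_derivWithin I01_uniqueDiff le_rfl
  exact h1.congr fun p hp =>
    ((f_diffAt hder i hp).derivWithin (I01_uniqueDiff p hp)).symm

lemma fw_props (hC1 : ∀ i, ContDiffOn ℝ 1 (f i) I01)
    (hmap : ∀ i, Set.MapsTo (f i) I01 I01)
    (hder : ∀ i, ∀ p ∈ I01, deriv (f i) p ≠ 0) (ξ : BSeq N) (n : ℕ) :
    (∀ p ∈ I01, DifferentiableAt ℝ (fw f ξ n) p) ∧
      ContinuousOn (deriv (fw f ξ n)) I01 ∧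
      (∀ p ∈ I01, deriv (fw f ξ n) p ≠ 0) := by
  induction n with
  | zero =>
    refine ⟨fun p _ => differentiableAt_id, ?_, fun p _ => ?_⟩
    · have : ∀ p : ℝ, deriv (fw f ξ 0) p = 1 := fun p => by
        simp [fw]
      exact (continuousOn_const (c := (1:ℝ))).congr fun p _ => this p
    · simp [fw]
  | succ n ih =>
    obtain ⟨ihd, ihc, ihn⟩ := ih
    have hcomp : fw f ξ (n + 1) = (f (ξ (n : ℤ))) ∘ (fw f ξ n) := rfl
    have hdiff : ∀ p ∈ I01, DifferentiableAt ℝ (fw f ξ (n+1)) p := by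
      intro p hp
      rw [hcomp]
      exact (f_diffAt hder _ (fw_mem hmap ξ n hp)).comp p (ihd p hp)
    have hderiv : ∀ p ∈ I01, deriv (fw f ξ (n+1)) p
        = deriv (f (ξ (n : ℤ))) (fw f ξ n p) * deriv (fw f ξ n) p := by
      intro p hp
      rw [hcomp]
      exact deriv_comp (x := p) (f_diffAt hder _ (fw_mem hmap ξ n hp)) (ihd p hp)
    refine ⟨hdiff, ?_, fun p hp => ?_⟩
    · have hcont : ContinuousOn
          (fun p => deriv (f (ξ (n : ℤ))) (fw f ξ n p) * deriv (fw f ξ n) p) I01 := by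
        apply ContinuousOn.mul
        · exact (derivf_contOn hC1 hder _).comp
            (fun p hp => (ihd p hp).continuousAt.continuousWithinAt)
            (fun p hp => fw_mem hmap ξ n hp)
        · exact ihc
      exact hcont.congr hderiv
    · rw [hderiv p hp]
      exact mul_ne_zero (hder _ _ (fw_mem hmap ξ n hp)) (ihn p hp)

lemma mvt_aux (g : ℝ → ℝ) (hd : ∀ x ∈ I01, DifferentiableAt ℝ g x)
    {p q : ℝ} (hp : p ∈ I01) (hq : q ∈ I01) (hpq : p < q) :
    ∃ θ ∈ Set.Ioo p q, g q - g p = deriv g θ * (q - p) := by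
  have hsub : Set.Icc p q ⊆ I01 := by
    rw [I01_eq] at *
    exact Set.Icc_subset_Icc hp.1 hq.2
  have hcont : ContinuousOn g (Set.Icc p q) :=
    fun x hx => ((hd x (hsub hx)).continuousAt).continuousWithinAt
  have hdd : ∀ x ∈ Set.Ioo p q, HasDerivAt g (deriv g x) x := fun x hx =>
    (hd x (hsub (Set.mem_Icc_of_Ioo hx))).hasDerivAt
  obtain ⟨θ, hθ, hslope⟩ := exists_hasDerivAt_eq_slope g (deriv g) hpq hcont hdd
  refine ⟨θ, hθ, ?_⟩
  rw [hslope, div_mul_cancel₀]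
  exact sub_ne_zero_of_ne hpq.ne'

end Analytic
section UnifCont

variable {N : ℕ} {f : Fin N → ℝ → ℝ}

lemma key_delta (hC1 : ∀ i, ContDiffOn ℝ 1 (f i) I01)
    (hmap : ∀ i, Set.MapsTo (f i) I01 I01)
    (hder : ∀ i, ∀ p ∈ I01, deriv (f i) p ≠ 0)
    (hN : 0 < N) (n : ℕ) {ε : ℝ} (hε : 0 < ε) :
    ∃ δ > 0, ∀ ξ : BSeq N, ∀ x ∈ I01, ∀ y ∈ I01,
      |x - y| ≤ δ → |deriv (fw f ξ n) x - deriv (fw f ξ n) y| ≤ ε := by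
  classical
  set ext : (Fin n → Fin N) → BSeq N := fun w m =>
    if h : 0 ≤ m ∧ m < n then w ⟨m.toNat, by omega⟩ else ⟨0, hN⟩ with hext_def
  have hext : ∀ ξ : BSeq N, fw f ξ n = fw f (ext (fun k => ξ (k : ℤ))) n := by
    intro ξ
    apply fw_congr
    intro k hk
    have h1 : (0:ℤ) ≤ (k:ℤ) ∧ (k:ℤ) < (n:ℤ) := ⟨Int.natCast_nonneg k, by exact_mod_cast hk⟩
    simp only [hext_def, h1, dif_pos]
    simp
  have key : ∀ w : Fin n → Fin N, ∃ δ, 0 < δ ∧ ∀ x ∈ I01, ∀ y ∈ I01,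
      |x - y| ≤ δ → |deriv (fw f (ext w) n) x - deriv (fw f (ext w) n) y| ≤ ε := by
    intro w
    have huc : UniformContinuousOn (deriv (fw f (ext w) n)) I01 :=
      I01_compact.uniformContinuousOn_of_continuous
        (fw_props hC1 hmap hder (ext w) n).2.1
    rw [Metric.uniformContinuousOn_iff_le] at huc
    obtain ⟨δ, hδ, hδ'⟩ := huc ε hε
    refine ⟨δ, hδ, fun x hx y hy hxy => ?_⟩
    have := hδ' x hx y hy (by rwa [Real.dist_eq])
    rwa [Real.dist_eq] at this
  choose Δ hΔpos hΔ using key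
  haveI : NeZero N := ⟨hN.ne'⟩
  have hne : (Finset.univ : Finset (Fin n → Fin N)).Nonempty := Finset.univ_nonempty
  refine ⟨Finset.univ.inf' hne Δ, (Finset.lt_inf'_iff hne).mpr fun w _ => hΔpos w,
    fun ξ x hx y hy hxy => ?_⟩
  rw [hext ξ]
  exact hΔ (fun k => ξ (k : ℤ)) x hx y hy (hxy.trans (Finset.inf'_le _ (Finset.mem_univ _)))

end UnifCont
section Counting

lemma count_lemma {T : Set ℝ} {δ : ℝ} (hδ : 0 < δ) (ψ : ℕ → ℝ → ℝ)
    (hrange : ∀ k, ∀ p ∈ T, ψ k p ∈ I01)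
    (hsep : ∀ p ∈ T, ∀ q ∈ T, p ≠ q → ∃ k, δ < |ψ k p - ψ k q|)
    (hpers : ∀ k, ∀ p ∈ T, ∀ q ∈ T, δ < |ψ k p - ψ k q| →
      δ < |ψ (k+1) p - ψ (k+1) q|) :
    T.Finite ∧ Nat.card T ≤ ⌊δ⁻¹⌋₊ + 1 := by
  classical
  set M : ℕ := ⌊δ⁻¹⌋₊ + 1 with hM
  have hmono : ∀ p ∈ T, ∀ q ∈ T, ∀ k k', k ≤ k' →
      δ < |ψ k p - ψ k q| → δ < |ψ k' p - ψ k' q| := by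
    intro p hp q hq k k' hkk' h
    induction k' , hkk' using Nat.le_induction with
    | base => exact h
    | succ m hm ih => exact hpers m p hp q hq ih
  have cardS : ∀ S : Finset ℝ, ↑S ⊆ T → S.card ≤ M := by
    intro S hS
    have hex : ∀ pq : ℝ × ℝ, ∃ k, pq.1 ∈ T → pq.2 ∈ T → pq.1 ≠ pq.2 →
        δ < |ψ k pq.1 - ψ k pq.2| := by
      intro pq
      by_cases h : pq.1 ∈ T ∧ pq.2 ∈ T ∧ pq.1 ≠ pq.2
      · obtain ⟨k, hk⟩ := hsep pq.1 h.1 pq.2 h.2.1 h.2.2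
        exact ⟨k, fun _ _ _ => hk⟩
      · exact ⟨0, fun h1 h2 h3 => absurd ⟨h1, h2, h3⟩ h⟩
    choose κ hκ using hex
    set K : ℕ := (S ×ˢ S).sup κ with hK
    have hsepK : ∀ p ∈ S, ∀ q ∈ S, p ≠ q → δ < |ψ K p - ψ K q| := by
      intro p hp q hq hne
      have hkK : κ (p, q) ≤ K :=
        Finset.le_sup (Finset.mem_product.mpr ⟨hp, hq⟩)
      exact hmono p (hS hp) q (hS hq) _ K hkK
        (hκ (p, q) (hS hp) (hS hq) hne)
    set φ : ℝ → ℕ := fun p => ⌊ψ K p / δ⌋₊ with hφ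
    have hinjφ : Set.InjOn φ ↑S := by
      intro p hp q hq hpq
      by_contra hne
      have hlt := hsepK p hp q hq hne
      have hxI := hrange K p (hS hp)
      have hyI := hrange K q (hS hq)
      rw [I01_eq] at hxI hyI
      have h1 : (φ p : ℝ) * δ ≤ ψ K p := by
        rw [← le_div_iff₀ hδ]
        exact Nat.floor_le (div_nonneg hxI.1 hδ.le)
      have h2 : ψ K p < ((φ p : ℝ) + 1) * δ := by
        rw [← div_lt_iff₀ hδ]
        exact_mod_cast Nat.lt_floor_add_one (ψ K p / δ)
      have h3 : (φ q : ℝ) * δ ≤ ψ K q := by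
        rw [← le_div_iff₀ hδ]
        exact Nat.floor_le (div_nonneg hyI.1 hδ.le)
      have h4 : ψ K q < ((φ q : ℝ) + 1) * δ := by
        rw [← div_lt_iff₀ hδ]
        exact_mod_cast Nat.lt_floor_add_one (ψ K q / δ)
      rw [hpq] at h1 h2
      have : |ψ K p - ψ K q| < δ := by
        rw [abs_sub_lt_iff]
        constructor <;> nlinarith
      linarith [hlt, this]
    have hφle : ∀ p ∈ S, φ p < M := by
      intro p hp
      have hxI := hrange K p (hS hp)
      rw [I01_eq] at hxI
      have : ψ K p / δ ≤ δ⁻¹ := by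
        rw [div_le_iff₀ hδ, inv_mul_cancel₀ hδ.ne']
        exact hxI.2
      have h5 := Nat.floor_le_floor this
      show ⌊ψ K p / δ⌋₊ < M
      omega
    have : S.card = (S.image φ).card := (Finset.card_image_of_injOn hinjφ).symm
    rw [this]
    have hsub : S.image φ ⊆ Finset.range M := by
      intro m hm
      obtain ⟨p, hp, rfl⟩ := Finset.mem_image.mp hm
      exact Finset.mem_range.mpr (hφle p hp)
    calc (S.image φ).card ≤ (Finset.range M).card := Finset.card_le_card hsub
      _ = M := Finset.card_range M
  have hfin : T.Finite := by
    by_contra hinf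
    obtain ⟨S, hS, hcard⟩ := Set.Infinite.exists_subset_card_eq hinf (M + 1)
    have := cardS S hS
    omega
  refine ⟨hfin, ?_⟩
  have h1 : Nat.card T = hfin.toFinset.card := by
    rw [Nat.card_coe_set_eq, Set.ncard_eq_toFinset_card T hfin]
  rw [h1]
  exact cardS hfin.toFinset (by simp)

end Counting
section Steps

variable {N : ℕ} {f : Fin N → ℝ → ℝ}

/-- Expansion: near a point with big derivative, gaps at least double. -/
lemma claimA (hC1 : ∀ i, ContDiffOn ℝ 1 (f i) I01)
    (hmap : ∀ i, Set.MapsTo (f i) I01 I01)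
    (hder : ∀ i, ∀ p ∈ I01, deriv (f i) p ≠ 0)
    (ξ : BSeq N) (n : ℕ) {δ : ℝ}
    (huc : ∀ x ∈ I01, ∀ y ∈ I01, |x - y| ≤ δ →
      |deriv (fw f ξ n) x - deriv (fw f ξ n) y| ≤ 1)
    {a b : ℝ} (ha : a ∈ I01) (hb : b ∈ I01)
    (hbig : (3:ℝ) ≤ |deriv (fw f ξ n) a|)
    (hab : |a - b| ≤ δ) :
    2 * |a - b| ≤ |fw f ξ n a - fw f ξ n b| := by
  obtain ⟨hdiff, -, -⟩ := fw_props hC1 hmap hder ξ n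
  set g := fw f ξ n with hg
  rcases lt_trichotomy a b with h | h | h
  · obtain ⟨θ, hθ, heq⟩ := mvt_aux g hdiff ha hb h
    have hθI : θ ∈ I01 := by
      rw [I01_eq] at ha hb ⊢
      exact ⟨ha.1.trans hθ.1.le, hθ.2.le.trans hb.2⟩
    have hθa : |a - θ| ≤ δ := by
      rw [abs_le] at hab ⊢
      exact ⟨by linarith [hθ.2], by linarith [hθ.1]⟩
    have h1 : |deriv g a - deriv g θ| ≤ 1 := huc a ha θ hθI hθa
    have h2 : (2:ℝ) ≤ |deriv g θ| := by
      have := abs_sub_abs_le_abs_sub (deriv g a) (deriv g θ)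
      linarith
    have h3 : |g a - g b| = |deriv g θ| * |a - b| := by
      rw [abs_sub_comm a b, abs_sub_comm (g a) (g b), heq, abs_mul]
    rw [h3]
    nlinarith [abs_nonneg (a - b)]
  · simp [h]
  · obtain ⟨θ, hθ, heq⟩ := mvt_aux g hdiff hb ha h
    have hθI : θ ∈ I01 := by
      rw [I01_eq] at ha hb ⊢
      exact ⟨hb.1.trans hθ.1.le, hθ.2.le.trans ha.2⟩
    have hθa : |a - θ| ≤ δ := by
      rw [abs_le] at hab ⊢
      exact ⟨by linarith [hθ.2], by linarith [hθ.1]⟩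
    have h1 : |deriv g a - deriv g θ| ≤ 1 := huc a ha θ hθI hθa
    have h2 : (2:ℝ) ≤ |deriv g θ| := by
      have := abs_sub_abs_le_abs_sub (deriv g a) (deriv g θ)
      linarith
    have h3 : |g a - g b| = |deriv g θ| * |a - b| := by
      rw [heq, abs_mul]
    rw [h3]
    nlinarith [abs_nonneg (a - b)]

/-- Expansion: well-separated fiber points stay separated. -/
lemma claimB (hC1 : ∀ i, ContDiffOn ℝ 1 (f i) I01)
    (hinj : ∀ i, Set.InjOn (f i) I01)
    (hmap : ∀ i, Set.MapsTo (f i) I01 I01)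
    (hder : ∀ i, ∀ p ∈ I01, deriv (f i) p ≠ 0)
    (ξ : BSeq N) (n : ℕ) {δ : ℝ} (hδ : 0 < δ)
    (huc : ∀ x ∈ I01, ∀ y ∈ I01, |x - y| ≤ δ →
      |deriv (fw f ξ n) x - deriv (fw f ξ n) y| ≤ 1)
    {p q : ℝ} (hp : p ∈ I01) (hq : q ∈ I01)
    (hbigp : (3:ℝ) ≤ |deriv (fw f ξ n) p|)
    (hbigq : (3:ℝ) ≤ |deriv (fw f ξ n) q|)
    (hfar : δ < |p - q|) :
    δ < |fw f ξ n p - fw f ξ n q| := by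
  set g := fw f ξ n with hg
  have hcont : ContinuousOn g I01 := by
    intro x hx
    exact ((fw_props hC1 hmap hder ξ n).1 x hx).continuousAt.continuousWithinAt
  have hmono := ContinuousOn.strictMonoOn_of_injOn_Icc' (zero_le_one)
    (by rw [← I01_eq]; exact hcont) (by rw [← I01_eq]; exact fw_injOn hinj hmap ξ n)
  -- wlog p < q
  have main : ∀ p q : ℝ, p ∈ I01 → q ∈ I01 → (3:ℝ) ≤ |deriv g p| →
      δ < q - p → δ < |g p - g q| := by
    intro p q hp hq hbig hlt
    rw [I01_eq] at hp hq
    have hr : p + δ ∈ I01 := by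
      rw [I01_eq]
      constructor <;> [linarith [hp.1, hδ]; linarith [hq.2]]
    have h2δ : 2 * δ ≤ |g p - g (p + δ)| := by
      have := claimA hC1 hmap hder ξ n huc (by rw [I01_eq]; exact hp) hr hbig
        (by rw [show p - (p + δ) = -δ by ring, abs_neg, abs_of_pos hδ])
      rw [show |p - (p + δ)| = δ by
        rw [show p - (p + δ) = -δ by ring, abs_neg, abs_of_pos hδ]] at this
      exact this
    have hprI : p ∈ Set.Icc (0:ℝ) 1 := hp
    have hqI : q ∈ Set.Icc (0:ℝ) 1 := hq
    have hrI : p + δ ∈ Set.Icc (0:ℝ) 1 := by rw [I01_eq] at hr; exact hr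
    have hple : p < p + δ := by linarith
    have hrq : p + δ < q := by linarith
    rcases hmono with hm | hm
    · have e1 : g p < g (p + δ) := hm hprI hrI hple
      have e2 : g (p + δ) ≤ g q := (hm hrI hqI hrq).le
      rw [abs_sub_comm, abs_of_pos (by linarith)]
      have : |g p - g (p + δ)| = g (p + δ) - g p := by
        rw [abs_sub_comm, abs_of_pos (by linarith)]
      linarith [h2δ, this ▸ h2δ]
    · have e1 : g (p + δ) < g p := hm hprI hrI hple
      have e2 : g q ≤ g (p + δ) := (hm hrI hqI hrq).le
      rw [abs_of_pos (by linarith)]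
      have : |g p - g (p + δ)| = g p - g (p + δ) := abs_of_pos (by linarith)
      linarith [this ▸ h2δ]
  rcases lt_trichotomy p q with h | h | h
  · have : δ < q - p := by
      rw [abs_of_neg (by linarith : p - q < 0)] at hfar; linarith
    exact main p q hp hq hbigp this
  · rw [h] at hfar; simp at hfar; linarith
  · have : δ < p - q := by
      rw [abs_of_pos (by linarith : 0 < p - q)] at hfar; linarith
    rw [abs_sub_comm]
    exact main q p hq hp hbigq this

/-- Contraction: near a point with small derivative, gaps shrink. -/
lemma claimC (hC1 : ∀ i, ContDiffOn ℝ 1 (f i) I01)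
    (hmap : ∀ i, Set.MapsTo (f i) I01 I01)
    (hder : ∀ i, ∀ p ∈ I01, deriv (f i) p ≠ 0)
    (ξ : BSeq N) (n : ℕ) {δ : ℝ}
    (huc : ∀ x ∈ I01, ∀ y ∈ I01, |x - y| ≤ δ →
      |deriv (fw f ξ n) x - deriv (fw f ξ n) y| ≤ 1/3)
    {a b : ℝ} (ha : a ∈ I01) (hb : b ∈ I01)
    (hsmall : |deriv (fw f ξ n) a| ≤ 1/3)
    (hab : |a - b| ≤ δ) :
    |fw f ξ n a - fw f ξ n b| ≤ (2/3) * |a - b| := by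
  obtain ⟨hdiff, -, -⟩ := fw_props hC1 hmap hder ξ n
  set g := fw f ξ n with hg
  rcases lt_trichotomy a b with h | h | h
  · obtain ⟨θ, hθ, heq⟩ := mvt_aux g hdiff ha hb h
    have hθI : θ ∈ I01 := by
      rw [I01_eq] at ha hb ⊢
      exact ⟨ha.1.trans hθ.1.le, hθ.2.le.trans hb.2⟩
    have hθa : |a - θ| ≤ δ := by
      rw [abs_le] at hab ⊢
      exact ⟨by linarith [hθ.2], by linarith [hθ.1]⟩
    have h1 : |deriv g a - deriv g θ| ≤ 1/3 := huc a ha θ hθI hθa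
    have h2 : |deriv g θ| ≤ 2/3 := by
      have := abs_sub_abs_le_abs_sub (deriv g θ) (deriv g a)
      rw [abs_sub_comm] at this
      linarith
    have h3 : |g a - g b| = |deriv g θ| * |a - b| := by
      rw [abs_sub_comm a b, abs_sub_comm (g a) (g b), heq, abs_mul]
    rw [h3]
    nlinarith [abs_nonneg (a - b)]
  · simp [h]
  · obtain ⟨θ, hθ, heq⟩ := mvt_aux g hdiff hb ha h
    have hθI : θ ∈ I01 := by
      rw [I01_eq] at ha hb ⊢
      exact ⟨hb.1.trans hθ.1.le, hθ.2.le.trans ha.2⟩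
    have hθa : |a - θ| ≤ δ := by
      rw [abs_le] at hab ⊢
      exact ⟨by linarith [hθ.2], by linarith [hθ.1]⟩
    have h1 : |deriv g a - deriv g θ| ≤ 1/3 := huc a ha θ hθI hθa
    have h2 : |deriv g θ| ≤ 2/3 := by
      have := abs_sub_abs_le_abs_sub (deriv g θ) (deriv g a)
      rw [abs_sub_comm] at this
      linarith
    have h3 : |g a - g b| = |deriv g θ| * |a - b| := by
      rw [heq, abs_mul]
    rw [h3]
    nlinarith [abs_nonneg (a - b)]

end Steps
/-- **Theorem A.** Any invariant hyperbolic set of a step skew-product with `C¹`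
injective fiber maps intersects every fiber in a uniformly bounded number of points. -/
theorem invariant_hyperbolic_set_fibers_uniformly_finite
    {N : ℕ} (f : Fin N → ℝ → ℝ)
    (hC1 : ∀ i, ContDiffOn ℝ 1 (f i) I01)
    (hinj : ∀ i, Set.InjOn (f i) I01)
    (hmap : ∀ i, Set.MapsTo (f i) I01 I01)
    (hder : ∀ i, ∀ p ∈ I01, deriv (f i) p ≠ 0)
    (H : Set (BSeq N × ℝ))
    (hHΛ : H ⊆ ⋂ n : ℕ, (Fmap f)^[n] '' (Set.univ ×ˢ I01))
    (hHinv : Fmap f '' H = H)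
    (hhyp : HypContr f H ∨ HypExp f H) :
    ∃ M : ℕ, 1 ≤ M ∧ ∀ ξ : BSeq N,
      {p : ℝ | (ξ, p) ∈ H}.Finite ∧ Nat.card {p : ℝ | (ξ, p) ∈ H} ≤ M := by
  classical
  rcases Nat.eq_zero_or_pos N with hN0 | hN
  · subst hN0
    exact ⟨1, le_rfl, fun ξ => (Nat.not_lt_zero _ (ξ 0).isLt).elim⟩
  haveI : NeZero N := ⟨hN.ne'⟩
  -- basic facts
  have hHI : ∀ z ∈ H, z.2 ∈ I01 := by
    intro z hz
    have h0 := Set.mem_iInter.mp (hHΛ hz) 0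
    rw [Function.iterate_zero, Set.image_id] at h0
    exact h0.2
  have hFwd : ∀ z ∈ H, Fmap f z ∈ H := fun z hz =>
    hHinv ▸ Set.mem_image_of_mem _ hz
  have hFwdIter : ∀ m : ℕ, ∀ z ∈ H, (Fmap f)^[m] z ∈ H := by
    intro m
    induction m with
    | zero => intro z hz; simpa using hz
    | succ m ih =>
      intro z hz
      rw [Function.iterate_succ_apply']
      exact hFwd _ (ih z hz)
  have hFinj : Set.InjOn (Fmap f) H := by
    intro z hz w hw h
    simp only [Fmap, Prod.mk.injEq] at h
    have h1 : z.1 = w.1 := shift_inj h.1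
    have h2 : z.2 = w.2 := by
      rw [h1] at h
      exact (hinj _) (hHI z hz) (hHI w hw) h.2
    exact Prod.ext h1 h2
  have hIterInj : ∀ m : ℕ, Set.InjOn ((Fmap f)^[m]) H := by
    intro m
    induction m with
    | zero => intro z _ w _ h; simpa using h
    | succ m ih =>
      intro z hz w hw h
      rw [Function.iterate_succ_apply', Function.iterate_succ_apply'] at h
      exact ih hz hw (hFinj (hFwdIter m z hz) (hFwdIter m w hw) h)
  rcases hhyp with hcon | hexp
  · -- CONTRACTION case: use backward orbits
    obtain ⟨c, hc, lam, hl0, hl1, hbound⟩ := hcon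
    obtain ⟨n0, hn0⟩ := exists_pow_lt_of_lt_one
      (by positivity : (0:ℝ) < 1 / (3 * c)) hl1
    set n : ℕ := n0 + 1 with hn
    have hn1 : 1 ≤ n := Nat.le_add_left 1 n0
    have hpow : lam ^ n < 1 / (3 * c) :=
      lt_of_le_of_lt (pow_le_pow_of_le_one hl0.le hl1.le (Nat.le_succ n0)) hn0
    have hsmall : ∀ z ∈ H, |deriv (fw f z.1 n) z.2| ≤ 1/3 := by
      intro z hz
      have h1 := hbound n hn1 z hz
      have h2 : c * lam ^ n ≤ 1/3 := by
        have h := mul_le_mul_of_nonneg_left hpow.le hc.le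
        have h4 : c * (1/(3*c)) = 1/3 := by
          rw [mul_one_div, div_eq_div_iff (by positivity) (by norm_num)]
          ring
        linarith
      linarith
    obtain ⟨δ, hδ, huc⟩ := key_delta hC1 hmap hder hN n
      (by norm_num : (0:ℝ) < 1/3)
    -- backward orbit machinery
    have hHm : ∀ m : ℕ, (Fmap f)^[m] '' H = H := by
      intro m
      induction m with
      | zero => simp
      | succ m ih =>
        rw [Function.iterate_succ, Set.image_comp, hHinv, ih]
    have hbackex : ∀ m : ℕ, ∀ z : BSeq N × ℝ, z ∈ H →
        ∃ w, w ∈ H ∧ (Fmap f)^[m] w = z := by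
      intro m z hz
      rw [← hHm m] at hz
      obtain ⟨w, hw, hwz⟩ := hz
      exact ⟨w, hw, hwz⟩
    choose! back hbackH hbackF using hbackex
    have hbackuniq : ∀ m : ℕ, ∀ z w, z ∈ H → w ∈ H →
        (Fmap f)^[m] w = z → w = back m z := by
      intro m z w hz hw hwz
      exact hIterInj m hw (hbackH m z hz) (hwz.trans (hbackF m z hz).symm)
    have hbase : ∀ m : ℕ, ∀ z, z ∈ H → shiftSeq^[m] (back m z).1 = z.1 := by
      intro m z hz
      have h := hbackF m z hz
      have h2 : (Fmap f)^[m] ((back m z).1, (back m z).2)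
          = (shiftSeq^[m] (back m z).1, fw f (back m z).1 m (back m z).2) :=
        Fmap_iter f _ _ m
      rw [Prod.mk.eta] at h2
      rw [h2] at h
      exact congrArg Prod.fst h
    have hfib : ∀ m : ℕ, ∀ z, z ∈ H →
        fw f (back m z).1 m (back m z).2 = z.2 := by
      intro m z hz
      have h := hbackF m z hz
      have h2 : (Fmap f)^[m] ((back m z).1, (back m z).2)
          = (shiftSeq^[m] (back m z).1, fw f (back m z).1 m (back m z).2) :=
        Fmap_iter f _ _ m
      rw [Prod.mk.eta] at h2
      rw [h2] at h
      exact congrArg Prod.snd h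
    refine ⟨⌊δ⁻¹⌋₊ + 1, Nat.le_add_left 1 _, fun ξ => ?_⟩
    set T : Set ℝ := {p : ℝ | (ξ, p) ∈ H} with hT
    set ψ : ℕ → ℝ → ℝ := fun k p => (back (k*n) (ξ, p)).2 with hψ
    have hmemT : ∀ p ∈ T, (ξ, p) ∈ H := fun p hp => hp
    have hsamebase : ∀ m : ℕ, ∀ p ∈ T, ∀ q ∈ T,
        (back m (ξ, p)).1 = (back m (ξ, q)).1 := by
      intro m p hp q hq
      apply Function.Injective.iterate shift_inj m
      rw [hbase m _ (hmemT p hp), hbase m _ (hmemT q hq)]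
    have hψ0 : ∀ p ∈ T, ψ 0 p = p := by
      intro p hp
      have := hbackF 0 (ξ, p) (hmemT p hp)
      simp only [Function.iterate_zero, id_eq] at this
      simp only [hψ, Nat.zero_mul, this]
    have hbackin : ∀ k : ℕ, ∀ p ∈ T, back (k*n) (ξ, p) ∈ H :=
      fun k p hp => hbackH _ _ (hmemT p hp)
    -- relation between consecutive backward times
    have hrel : ∀ k : ℕ, ∀ p ∈ T,
        ψ k p = fw f (back ((k+1)*n) (ξ, p)).1 n (ψ (k+1) p) := by
      intro k p hp
      set w' := back ((k+1)*n) (ξ, p) with hw'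
      have hw'H : w' ∈ H := hbackin (k+1) p hp
      have hFn : (Fmap f)^[n] w' ∈ H := hFwdIter n w' hw'H
      have hcomm : (Fmap f)^[k*n] ((Fmap f)^[n] w') = (ξ, p) := by
        rw [← Function.iterate_add_apply]
        rw [show k*n + n = (k+1)*n by ring]
        exact hbackF _ _ (hmemT p hp)
      have huniq := hbackuniq (k*n) (ξ, p) ((Fmap f)^[n] w')
        (hmemT p hp) hFn hcomm
      have h2 : (Fmap f)^[n] (w'.1, w'.2) = (shiftSeq^[n] w'.1, fw f w'.1 n w'.2) :=
        Fmap_iter f _ _ n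
      rw [Prod.mk.eta] at h2
      have h3 : ψ k p = ((Fmap f)^[n] w').2 := by
        show (back (k*n) (ξ, p)).2 = _
        rw [← huniq]
      rw [h3, h2]
    -- step estimate
    have hstep : ∀ k : ℕ, ∀ p ∈ T, ∀ q ∈ T,
        |ψ (k+1) p - ψ (k+1) q| ≤ δ →
        |ψ k p - ψ k q| ≤ (2/3) * |ψ (k+1) p - ψ (k+1) q| := by
      intro k p hp q hq hclose
      set w' := back ((k+1)*n) (ξ, p) with hw'
      have hw'H : w' ∈ H := hbackin (k+1) p hp
      have hw'q : (w'.1, ψ (k+1) q) ∈ H := by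
        have hq1 : back ((k+1)*n) (ξ, q) ∈ H := hbackin (k+1) q hq
        have hb := hsamebase ((k+1)*n) p hp q hq
        have hq2 : ((back ((k+1)*n) (ξ, q)).1, (back ((k+1)*n) (ξ, q)).2) ∈ H := by
          rwa [Prod.mk.eta]
        rw [← hb] at hq2
        exact hq2
      have haI : ψ (k+1) p ∈ I01 := hHI _ hw'H
      have hbI : ψ (k+1) q ∈ I01 := hHI (w'.1, ψ (k+1) q) hw'q
      have hsm : |deriv (fw f w'.1 n) (ψ (k+1) p)| ≤ 1/3 := by
        have := hsmall w' hw'H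
        exact this
      have hC := claimC hC1 hmap hder w'.1 n (huc w'.1) haI hbI hsm hclose
      rw [hrel k p hp, hrel k q hq, ← hsamebase ((k+1)*n) p hp q hq]
      exact hC
    apply count_lemma hδ ψ
    · intro k p hp
      exact hHI _ (hbackin k p hp)
    · -- separation
      intro p hp q hq hne
      by_contra hall
      push_neg at hall
      have hshrink : ∀ k : ℕ, |ψ 0 p - ψ 0 q| ≤ (2/3)^k * |ψ k p - ψ k q| := by
        intro k
        induction k with
        | zero => simp
        | succ k ih =>
          have h1 := hstep k p hp q hq (hall (k+1))
          calc |ψ 0 p - ψ 0 q| ≤ (2/3)^k * |ψ k p - ψ k q| := ih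
            _ ≤ (2/3)^k * ((2/3) * |ψ (k+1) p - ψ (k+1) q|) := by
                apply mul_le_mul_of_nonneg_left h1 (by positivity)
            _ = (2/3)^(k+1) * |ψ (k+1) p - ψ (k+1) q| := by ring
      have hpq0 : 0 < |p - q| := abs_pos.mpr (sub_ne_zero_of_ne hne)
      obtain ⟨k, hk⟩ := exists_pow_lt_of_lt_one
        (by positivity : (0:ℝ) < |p - q| / δ) (by norm_num : (2:ℝ)/3 < 1)
      have h1 := hshrink k
      rw [hψ0 p hp, hψ0 q hq] at h1
      have h2 : (2/3:ℝ)^k * |ψ k p - ψ k q| ≤ (2/3)^k * δ :=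
        mul_le_mul_of_nonneg_left (hall k) (by positivity)
      have h3 : (2/3:ℝ)^k * δ < |p - q| := by
        rw [lt_div_iff₀ hδ] at hk
        linarith
      linarith
    · -- persistence
      intro k p hp q hq hfar
      by_contra h
      push_neg at h
      have := hstep k p hp q hq h
      have : |ψ k p - ψ k q| ≤ (2/3) * δ := by
        calc |ψ k p - ψ k q| ≤ (2/3) * |ψ (k+1) p - ψ (k+1) q| := this
          _ ≤ (2/3) * δ := by linarith
      linarith
  · -- EXPANSION case: forward orbits
    obtain ⟨c, hc, lam, hl0, hl1, hbound⟩ := hexp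
    have hinv1 : 1 < lam⁻¹ := (one_lt_inv₀ hl0).mpr hl1
    obtain ⟨n0, hn0⟩ := pow_unbounded_of_one_lt (3*c) hinv1
    set n : ℕ := n0 + 1 with hn
    have hn1 : 1 ≤ n := Nat.le_add_left 1 n0
    have hpow : 3*c < lam⁻¹ ^ n :=
      lt_of_lt_of_le hn0 (pow_le_pow_right₀ hinv1.le (Nat.le_succ n0))
    have hbig : ∀ z ∈ H, (3:ℝ) ≤ |deriv (fw f z.1 n) z.2| := by
      intro z hz
      have h1 := hbound n hn1 z hz
      have h2 : (3:ℝ) ≤ c⁻¹ * lam⁻¹ ^ n := by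
        have h := mul_le_mul_of_nonneg_left hpow.le (inv_nonneg.mpr hc.le)
        have h3 : c⁻¹ * (3*c) = 3 := by field_simp
        linarith
      linarith
    obtain ⟨δ, hδ, huc⟩ := key_delta hC1 hmap hder hN n
      (by norm_num : (0:ℝ) < 1)
    refine ⟨⌊δ⁻¹⌋₊ + 1, Nat.le_add_left 1 _, fun ξ => ?_⟩
    set T : Set ℝ := {p : ℝ | (ξ, p) ∈ H} with hT
    set ψ : ℕ → ℝ → ℝ := fun k p => fw f ξ (k*n) p with hψ
    have hmemT : ∀ p ∈ T, (ξ, p) ∈ H := fun p hp => hp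
    have hmemH : ∀ k : ℕ, ∀ p ∈ T, (shiftSeq^[k*n] ξ, ψ k p) ∈ H := by
      intro k p hp
      have := hFwdIter (k*n) (ξ, p) (hmemT p hp)
      rwa [Fmap_iter] at this
    have hrel : ∀ k : ℕ, ∀ p : ℝ,
        ψ (k+1) p = fw f (shiftSeq^[k*n] ξ) n (ψ k p) := by
      intro k p
      show fw f ξ ((k+1)*n) p = _
      rw [show (k+1)*n = k*n + n by ring, fw_add]
    apply count_lemma hδ ψ
    · intro k p hp
      exact hHI _ (hmemH k p hp)
    · -- separation via doubling
      intro p hp q hq hne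
      by_contra hall
      push_neg at hall
      have hgrow : ∀ k : ℕ, 2^k * |p - q| ≤ |ψ k p - ψ k q| := by
        intro k
        induction k with
        | zero =>
          have h0p : ψ 0 p = p := by simp [hψ, fw]
          have h0q : ψ 0 q = q := by simp [hψ, fw]
          rw [h0p, h0q]; simp
        | succ k ih =>
          have hA := claimA hC1 hmap hder (shiftSeq^[k*n] ξ) n
            (huc (shiftSeq^[k*n] ξ))
            (hHI _ (hmemH k p hp)) (hHI _ (hmemH k q hq))
            (hbig _ (hmemH k p hp)) (hall k)
          rw [← hrel k p, ← hrel k q] at hA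
          calc 2^(k+1) * |p - q| = 2 * (2^k * |p - q|) := by ring
            _ ≤ 2 * |ψ k p - ψ k q| := by linarith
            _ ≤ |ψ (k+1) p - ψ (k+1) q| := hA
      have hpq0 : 0 < |p - q| := abs_pos.mpr (sub_ne_zero_of_ne hne)
      obtain ⟨k, hk⟩ := pow_unbounded_of_one_lt (δ / |p - q|) (one_lt_two (α := ℝ))
      have h1 := hgrow k
      have h2 : δ < 2^k * |p - q| := by
        rw [div_lt_iff₀ hpq0] at hk
        linarith
      linarith [hall k]
    · -- persistence
      intro k p hp q hq hfar
      rw [hrel k p, hrel k q]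
      exact claimB hC1 hinj hmap hder (shiftSeq^[k*n] ξ) n hδ
        (huc (shiftSeq^[k*n] ξ)) (hHI _ (hmemH k p hp)) (hHI _ (hmemH k q hq))
        (hbig _ (hmemH k p hp)) (hbig _ (hmemH k q hq)) hfar
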